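/- arXiv:1108.0207 — 2 statements merged into one kernel-verified Lean document; each statement's English description precedes it below -/
import Mathlib

section
/- Let a₁ > 0, ψ ∈ C²(ℝ) with ψ(s) ≥ ν > 0 for all s ∈ ℝ, and p > 1. Assume either (i) k > 2 with lim_{s→+∞} s^{(2−k)/2}ψ(s) = 0 and lim_{s→+∞} s^{(4−k)/2}ψ'(s) = 0, or (ii) 0 < k ≤ 2 with ψ(s) converging to a finite positive limit and s ψ'(s) → 0 as s → +∞. Set a₀(s) = a₁|s|^k + ψ(s), let g₀ be the solution of g₀'(s) = 1/√(a₀(g₀(s))), g₀(0) = 0, and define 𝓗₂(s) = −(1/2) a₀'(g₀(s)) s g₀(s) (g₀'(s))³ + g₀(s) − p s g₀'(s). Then there exists s₂ > 0 such that 𝓗₂(s) < 0 for every s ≥ s₂. -/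
open Filter Real Topology

private lemma H2aux_div_eq (ε k sa XK TK : ℝ) (hε1 : ε < 1) (hεpos : 0 < ε)
    (hsa : 0 < sa) (hXKpos : 0 < XK) (hk : 0 < k) :
    ((1-ε) * sa * ((XK - TK)/(k/2+1))) / ((1+ε) * sa * XK)
      = (1-ε)/(1+ε) * (2/(k+2)) * (1 - TK/XK) := by
  have h1 : (1:ℝ)+ε ≠ 0 := by linarith
  have h2 : k+2 ≠ 0 := by linarith
  have h3 : k/2+1 ≠ 0 := by linarith
  field_simp

theorem H2_eventually_negative
    (k a₁ : ℝ) (ha₁ : 0 < a₁)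
    (ψ : ℝ → ℝ) (ν : ℝ) (hν : 0 < ν)
    (hψ : ContDiff ℝ 2 ψ) (hbound : ∀ s, ν ≤ ψ s)
    (p : ℝ) (hp : 1 < p)
    (hcases :
      (2 < k ∧
        Tendsto (fun s : ℝ => s ^ ((2 - k) / 2) * ψ s) atTop (𝓝 0) ∧
        Tendsto (fun s : ℝ => s ^ ((4 - k) / 2) * deriv ψ s) atTop (𝓝 0)) ∨
      (0 < k ∧ k ≤ 2 ∧
        (∃ L > (0 : ℝ), Tendsto ψ atTop (𝓝 L)) ∧
        Tendsto (fun s : ℝ => s * deriv ψ s) atTop (𝓝 0)))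
    (a₀ : ℝ → ℝ) (ha₀ : ∀ s, a₀ s = a₁ * |s| ^ k + ψ s)
    (g₀ : ℝ → ℝ)
    (hg₀ : ∀ s, HasDerivAt g₀ (1 / Real.sqrt (a₀ (g₀ s))) s) (hg₀0 : g₀ 0 = 0)
    (H₂ : ℝ → ℝ)
    (hH₂ : ∀ s, H₂ s = -(1 / 2) * deriv a₀ (g₀ s) * s * g₀ s * (deriv g₀ s) ^ 3
        + g₀ s - p * s * deriv g₀ s) :
    ∃ s₂ > (0 : ℝ), ∀ s ≥ s₂, H₂ s < 0 := by
  have hk : 0 < k := by rcases hcases with ⟨h, _⟩ | ⟨h, _⟩ <;> linarith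
  have hψcont : Continuous ψ := hψ.continuous
  have hψdiff : Differentiable ℝ ψ := hψ.differentiable (by norm_num)
  have ha₀pos : ∀ t, 0 < a₀ t := by
    intro t
    rw [ha₀ t]
    have h1 : 0 ≤ a₁ * |t| ^ k :=
      mul_nonneg ha₁.le (Real.rpow_nonneg (abs_nonneg t) k)
    linarith [hbound t]
  have ha₀cont : Continuous a₀ := by
    have h1 : Continuous fun s : ℝ => |s| ^ k :=
      continuous_abs.rpow_const (fun x => Or.inr hk.le)
    exact ((continuous_const.mul h1).add hψcont).congr (fun s => (ha₀ s).symm)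
  have hsqpos : ∀ t, 0 < Real.sqrt (a₀ t) := fun t => Real.sqrt_pos.mpr (ha₀pos t)
  have hgderiv : ∀ s, deriv g₀ s = 1 / Real.sqrt (a₀ (g₀ s)) := fun s => (hg₀ s).deriv
  have hg'pos : ∀ s, 0 < deriv g₀ s := by
    intro s; rw [hgderiv s]; exact one_div_pos.mpr (hsqpos _)
  have hgdiff : Differentiable ℝ g₀ := fun t => (hg₀ t).differentiableAt
  have hmono : StrictMono g₀ := strictMono_of_deriv_pos hg'pos
  have hgpos : ∀ s, 0 < s → 0 < g₀ s := by
    intro s hs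
    have := hmono hs
    rwa [hg₀0] at this
  -- g₀ tends to infinity
  have hgtop : Tendsto g₀ atTop atTop := by
    apply tendsto_atTop_atTop_of_monotone hmono.monotone
    intro M
    rcases (isCompact_Icc (a := (0:ℝ)) (b := max M 0)).exists_isMaxOn
      (Set.nonempty_Icc.mpr (le_max_right M 0)) ha₀cont.continuousOn with ⟨t₀, _, ht₀⟩
    set B := a₀ t₀ with hB
    have hBpos : 0 < B := ha₀pos t₀
    set s₁ := (max M 0 + 1) * Real.sqrt B with hs₁
    have hs₁pos : 0 < s₁ := by positivity
    by_cases hcase : ∀ t ∈ Set.Icc (0:ℝ) s₁, g₀ t ≤ max M 0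
    · -- then g₀ grows at least linearly on [0, s₁]
      exfalso
      have key : MonotoneOn (fun t => g₀ t - t / Real.sqrt B) (Set.Icc 0 s₁) := by
        apply monotoneOn_of_deriv_nonneg (convex_Icc _ _)
        · exact (hgdiff.sub (differentiable_id.div_const _)).continuous.continuousOn
        · exact (hgdiff.sub (differentiable_id.div_const _)).differentiableOn
        · intro x hx
          rw [interior_Icc] at hx
          have hgx : g₀ x ∈ Set.Icc (0:ℝ) (max M 0) := by
            constructor
            · rw [← hg₀0]; exact hmono.monotone hx.1.le
            · exact hcase x ⟨hx.1.le, hx.2.le⟩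
          have ha : a₀ (g₀ x) ≤ B := ht₀ hgx
          rw [show deriv (fun t => g₀ t - t / Real.sqrt B) x = _ from
            ((hg₀ x).sub ((hasDerivAt_id' x).div_const (Real.sqrt B))).deriv]
          have : Real.sqrt (a₀ (g₀ x)) ≤ Real.sqrt B := Real.sqrt_le_sqrt ha
          have h2 : 1 / Real.sqrt B ≤ 1 / Real.sqrt (a₀ (g₀ x)) :=
            one_div_le_one_div_of_le (hsqpos _) this
          linarith
      have h3 := key (Set.left_mem_Icc.mpr hs₁pos.le) (Set.right_mem_Icc.mpr hs₁pos.le) hs₁pos.le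
      simp only [hg₀0, zero_div] at h3
      have h4 : s₁ / Real.sqrt B = max M 0 + 1 := by
        rw [hs₁]; field_simp
      have h5 := hcase s₁ (Set.right_mem_Icc.mpr hs₁pos.le)
      rw [h4] at h3
      linarith
    · push_neg at hcase
      rcases hcase with ⟨t, _, ht⟩
      exact ⟨t, le_trans (le_max_left M 0) ht.le⟩
  -- decay of ψ relative to t^k
  have hA : Tendsto (fun t : ℝ => ψ t / t ^ k) atTop (𝓝 0) := by
    rcases hcases with ⟨hk2, h1, _⟩ | ⟨_, _, ⟨L, _, hL⟩, _⟩
    · have h0 : Tendsto (fun t : ℝ => (t ^ ((2-k)/2) * ψ t) * t ^ (-((k+2)/2)))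
          atTop (𝓝 0) := by
        have := h1.mul (tendsto_rpow_neg_atTop (by linarith : (0:ℝ) < (k+2)/2))
        simpa using this
      apply Tendsto.congr' _ h0
      filter_upwards [eventually_gt_atTop (0:ℝ)] with t ht
      have e : t ^ ((2-k)/2) * t ^ (-((k+2)/2)) = t ^ (-k) := by
        rw [← Real.rpow_add ht]; congr 1; ring
      calc (t ^ ((2-k)/2) * ψ t) * t ^ (-((k+2)/2))
          = ψ t * (t ^ ((2-k)/2) * t ^ (-((k+2)/2))) := by ring
        _ = ψ t * t ^ (-k) := by rw [e]
        _ = ψ t / t ^ k := by rw [Real.rpow_neg ht.le, div_eq_mul_inv]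
    · have h0 : Tendsto (fun t : ℝ => ψ t * t ^ (-k)) atTop (𝓝 0) := by
        have := hL.mul (tendsto_rpow_neg_atTop hk)
        simpa using this
      apply Tendsto.congr' _ h0
      filter_upwards [eventually_gt_atTop (0:ℝ)] with t ht
      rw [Real.rpow_neg ht.le, div_eq_mul_inv]
  have hB : Tendsto (fun t : ℝ => t * deriv ψ t / t ^ k) atTop (𝓝 0) := by
    rcases hcases with ⟨hk2, _, h2⟩ | ⟨_, _, _, h2⟩
    · have h0 : Tendsto (fun t : ℝ => (t ^ ((4-k)/2) * deriv ψ t) * t ^ (-((k+2)/2)))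
          atTop (𝓝 0) := by
        have := h2.mul (tendsto_rpow_neg_atTop (by linarith : (0:ℝ) < (k+2)/2))
        simpa using this
      apply Tendsto.congr' _ h0
      filter_upwards [eventually_gt_atTop (0:ℝ)] with t ht
      have e : t ^ ((4-k)/2) * t ^ (-((k+2)/2)) = t ^ (1-k) := by
        rw [← Real.rpow_add ht]; congr 1; ring
      have e2 : t * t ^ (-k) = t ^ (1-k) := by
        rw [show (1:ℝ)-k = 1 + -k by ring, Real.rpow_add ht, Real.rpow_one]
      calc (t ^ ((4-k)/2) * deriv ψ t) * t ^ (-((k+2)/2))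
          = deriv ψ t * (t ^ ((4-k)/2) * t ^ (-((k+2)/2))) := by ring
        _ = deriv ψ t * (t * t ^ (-k)) := by rw [e, e2]
        _ = t * deriv ψ t / t ^ k := by
            rw [Real.rpow_neg ht.le, div_eq_mul_inv]; ring
    · have h0 : Tendsto (fun t : ℝ => (t * deriv ψ t) * t ^ (-k)) atTop (𝓝 0) := by
        have := h2.mul (tendsto_rpow_neg_atTop hk)
        simpa using this
      apply Tendsto.congr' _ h0
      filter_upwards [eventually_gt_atTop (0:ℝ)] with t ht
      rw [Real.rpow_neg ht.le, div_eq_mul_inv]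
  -- derivative of a₀ on the positive axis
  have ha₀deriv : ∀ t : ℝ, 0 < t → deriv a₀ t = a₁ * (k * t ^ (k-1)) + deriv ψ t := by
    intro t ht
    have h1 : HasDerivAt (fun x : ℝ => a₁ * x ^ k + ψ x)
        (a₁ * (k * t ^ (k-1)) + deriv ψ t) t :=
      ((hasDerivAt_rpow_const (Or.inl ht.ne')).const_mul a₁).add (hψdiff t).hasDerivAt
    have h2 : a₀ =ᶠ[𝓝 t] fun x => a₁ * x ^ k + ψ x := by
      filter_upwards [eventually_gt_nhds ht] with x hx
      rw [ha₀ x, abs_of_pos hx]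
    exact (h1.congr_of_eventuallyEq h2).deriv
  -- the limit t a₀'(t)/a₀(t) → k
  have hRt : Tendsto (fun t : ℝ => t * deriv a₀ t / a₀ t) atTop (𝓝 k) := by
    have hN : Tendsto (fun t : ℝ => (a₁ * k + t * deriv ψ t / t ^ k) / (a₁ + ψ t / t ^ k))
        atTop (𝓝 ((a₁ * k + 0) / (a₁ + 0))) :=
      (tendsto_const_nhds.add hB).div (tendsto_const_nhds.add hA) (by simpa using ha₁.ne')
    have hval : (a₁ * k + 0) / (a₁ + 0) = k := by field_simp; ring
    rw [hval] at hN
    apply Tendsto.congr' _ hN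
    filter_upwards [eventually_gt_atTop (0:ℝ)] with t ht
    have htk : (0:ℝ) < t ^ k := Real.rpow_pos_of_pos ht k
    have hψt : 0 < ψ t := lt_of_lt_of_le hν (hbound t)
    have hden : 0 < a₁ * t ^ k + ψ t := by positivity
    have e : t * t ^ (k - 1) = t ^ k := by
      nth_rewrite 1 [← Real.rpow_one t]
      rw [← Real.rpow_add ht]; norm_num
    rw [ha₀deriv t ht, ha₀ t, abs_of_pos ht]
    have h1 : t * (a₁ * (k * t ^ (k-1)) + deriv ψ t) = a₁ * k * t ^ k + t * deriv ψ t := by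
      rw [← e]; ring
    rw [h1, div_eq_div_iff (by positivity) hden.ne']
    field_simp
  -- the primitive Φ of √a₀ and the identity Φ(g₀ s) = s
  set u : ℝ → ℝ := fun t => Real.sqrt (a₀ t) with hu
  have hucont : Continuous u := ha₀cont.sqrt
  have hunn : ∀ t, 0 ≤ u t := fun t => Real.sqrt_nonneg _
  set Φ : ℝ → ℝ := fun x => ∫ t in (0:ℝ)..x, u t with hΦdef
  have hΦderiv : ∀ x, HasDerivAt Φ (u x) x := fun x =>
    intervalIntegral.integral_hasDerivAt_right (hucont.intervalIntegrable _ _)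
      (hucont.stronglyMeasurableAtFilter _ _) hucont.continuousAt
  have hΦG : ∀ s, Φ (g₀ s) = s := by
    have hd : ∀ s, HasDerivAt (fun s => Φ (g₀ s) - s) 0 s := by
      intro s
      have h1 := ((hΦderiv (g₀ s)).comp s (hg₀ s)).sub (hasDerivAt_id s)
      have h2 : u (g₀ s) * (1 / Real.sqrt (a₀ (g₀ s))) - 1 = 0 := by
        rw [hu]
        field_simp [(hsqpos (g₀ s)).ne']; norm_num
      rwa [h2] at h1
    intro s
    have hconst := is_const_of_deriv_eq_zero (𝕜 := ℝ)
      (f := fun s => Φ (g₀ s) - s) (fun x => (hd x).differentiableAt)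
      (fun x => (hd x).deriv) s 0
    have hΦ0 : Φ 0 = 0 := intervalIntegral.integral_same
    rw [hg₀0, hΦ0] at hconst
    linarith
  -- the ratio √(a₀ t)/(√a₁ t^{k/2}) → 1
  have hratio : Tendsto (fun t : ℝ => u t / (Real.sqrt a₁ * t ^ (k/2))) atTop (𝓝 1) := by
    have h1 : Tendsto (fun t : ℝ => 1 + ψ t / t ^ k / a₁) atTop (𝓝 (1 + 0 / a₁)) :=
      tendsto_const_nhds.add (hA.div_const a₁)
    have h2 : Tendsto (fun t : ℝ => Real.sqrt (1 + ψ t / t ^ k / a₁)) atTop (𝓝 1) := by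
      have := (Real.continuous_sqrt.continuousAt (x := 1 + 0 / a₁)).tendsto.comp h1
      simpa [Function.comp_def] using this
    apply Tendsto.congr' _ h2
    filter_upwards [eventually_gt_atTop (0:ℝ)] with t ht
    have htk : (0:ℝ) < t ^ k := Real.rpow_pos_of_pos ht k
    have hroot : Real.sqrt (t ^ k) = t ^ (k/2) := by
      rw [Real.sqrt_eq_rpow, ← Real.rpow_mul ht.le, mul_one_div]
    have hinner : 1 + ψ t / t ^ k / a₁ = a₀ t / (a₁ * t ^ k) := by
      rw [ha₀ t, abs_of_pos ht]
      field_simp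
    rw [hinner, Real.sqrt_div (ha₀pos t).le, Real.sqrt_mul ha₁.le, hroot, hu]
  -- choice of the constant c
  set c : ℝ := (2/(2*p+k) + 2/(k+2)) / 2 with hc
  have hk2 : (0:ℝ) < k + 2 := by linarith
  have hpk : (0:ℝ) < 2*p + k := by linarith
  have hfrac : 2/(2*p+k) < 2/(k+2) :=
    div_lt_div_of_pos_left two_pos hk2 (by linarith)
  have hclt : c < 2/(k+2) := by rw [hc]; linarith
  have hcgt2 : 2/(2*p+k) < c := by rw [hc]; linarith
  have hcpos : 0 < c := by
    have : 0 < 2/(2*p+k) := by positivity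
    linarith
  have hcgt : 1 < c * (p + k/2) := by
    have h1 : 2/(2*p+k) * (p + k/2) = 1 := by field_simp
    have h2 : 0 < p + k/2 := by linarith
    nlinarith [mul_lt_mul_of_pos_right hcgt2 h2]
  -- choice of ε
  obtain ⟨ε, hεmem, hεc⟩ : ∃ ε : ℝ, ε ∈ Set.Ioo (0:ℝ) 1 ∧ c < (1-ε)/(1+ε) * (2/(k+2)) := by
    have hcont : ContinuousAt (fun ε : ℝ => (1-ε)/(1+ε) * (2/(k+2))) 0 :=
      ((continuousAt_const.sub continuousAt_id).div
        (continuousAt_const.add continuousAt_id) (by norm_num)).mul continuousAt_const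
    have h0 : c < (1-(0:ℝ))/(1+(0:ℝ)) * (2/(k+2)) := by
      norm_num
      linarith
    have hev : ∀ᶠ ε in 𝓝 (0:ℝ), c < (1-ε)/(1+ε) * (2/(k+2)) :=
      hcont.eventually (eventually_gt_nhds h0)
    have h2 : ∀ᶠ ε in 𝓝[>] (0:ℝ), ε ∈ Set.Ioo (0:ℝ) 1 :=
      Ioo_mem_nhdsGT_of_mem (Set.mem_Ico.mpr ⟨le_refl 0, one_pos⟩)
    exact ((h2.and (hev.filter_mono nhdsWithin_le_nhds)).exists)
  obtain ⟨hεpos, hε1⟩ := hεmem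
  -- two-sided bounds on u
  have hbounds : ∀ᶠ t in atTop,
      (1-ε) * (Real.sqrt a₁ * t ^ (k/2)) ≤ u t ∧ u t ≤ (1+ε) * (Real.sqrt a₁ * t ^ (k/2)) := by
    have h1 := hratio.eventually
      (Ioo_mem_nhds (show 1-ε < 1 by linarith) (show 1 < 1+ε by linarith))
    filter_upwards [h1, eventually_gt_atTop (0:ℝ)] with t hmem ht
    have hv : 0 < Real.sqrt a₁ * t ^ (k/2) := by positivity
    constructor
    · have := hmem.1
      rw [lt_div_iff₀ hv] at this
      linarith
    · have := hmem.2
      rw [div_lt_iff₀ hv] at this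
      linarith
  obtain ⟨T₀, hT₀⟩ := eventually_atTop.mp hbounds
  set T : ℝ := max T₀ 1 with hTdef
  have hT1 : (1:ℝ) ≤ T := le_max_right _ _
  have hTpos : (0:ℝ) < T := lt_of_lt_of_le one_pos hT1
  have hT : ∀ t, t ≥ T → (1-ε) * (Real.sqrt a₁ * t ^ (k/2)) ≤ u t ∧
      u t ≤ (1+ε) * (Real.sqrt a₁ * t ^ (k/2)) :=
    fun t ht => hT₀ t (le_trans (le_max_left _ _) ht)
  have hκpos : (0:ℝ) < k/2 + 1 := by linarith
  -- the key eventual lower bound on Φ x / (x u x)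
  have hQev : ∀ᶠ x in atTop, c < Φ x / (x * u x) := by
    have htail0 : Tendsto (fun x : ℝ => T ^ (k/2+1) / x ^ (k/2+1)) atTop (𝓝 0) :=
      Tendsto.div_atTop tendsto_const_nhds (tendsto_rpow_atTop hκpos)
    have htail : Tendsto (fun x : ℝ => (1-ε)/(1+ε) * (2/(k+2)) * (1 - T ^ (k/2+1) / x ^ (k/2+1)))
        atTop (𝓝 ((1-ε)/(1+ε) * (2/(k+2)) * (1 - 0))) :=
      tendsto_const_nhds.mul (tendsto_const_nhds.sub htail0)
    have hgtc : ∀ᶠ x in atTop,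
        c < (1-ε)/(1+ε) * (2/(k+2)) * (1 - T ^ (k/2+1) / x ^ (k/2+1)) :=
      htail.eventually (eventually_gt_nhds (by simpa using hεc))
    filter_upwards [hgtc, eventually_ge_atTop T] with x hx hxT
    have hx0 : 0 < x := lt_of_lt_of_le hTpos hxT
    have hXK : 0 < x ^ (k/2+1) := Real.rpow_pos_of_pos hx0 _
    have hTK : 0 < T ^ (k/2+1) := Real.rpow_pos_of_pos hTpos _
    have hTKle : T ^ (k/2+1) ≤ x ^ (k/2+1) := Real.rpow_le_rpow hTpos.le hxT hκpos.le
    -- lower bound for the numerator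
    have hlow : Continuous (fun t : ℝ => (1-ε) * (Real.sqrt a₁ * t ^ (k/2))) := by
      apply continuous_const.mul
      apply continuous_const.mul
      apply continuous_iff_continuousAt.mpr
      intro y
      exact Real.continuousAt_rpow_const y (k/2) (Or.inr (by linarith))
    have hIlow : ∫ t in T..x, (1-ε) * (Real.sqrt a₁ * t ^ (k/2))
        = (1-ε) * Real.sqrt a₁ * ((x ^ (k/2+1) - T ^ (k/2+1)) / (k/2+1)) := by
      rw [intervalIntegral.integral_const_mul, intervalIntegral.integral_const_mul,
        integral_rpow (Or.inl (by linarith : (-1:ℝ) < k/2))]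
      ring
    have hmono2 : ∫ t in T..x, (1-ε) * (Real.sqrt a₁ * t ^ (k/2)) ≤ ∫ t in T..x, u t := by
      apply intervalIntegral.integral_mono_on hxT (hlow.intervalIntegrable _ _)
        (hucont.intervalIntegrable _ _)
      intro t htm
      exact (hT t htm.1).1
    have hsplit : Φ x = (∫ t in (0:ℝ)..T, u t) + ∫ t in T..x, u t :=
      (intervalIntegral.integral_add_adjacent_intervals (hucont.intervalIntegrable _ _)
        (hucont.intervalIntegrable _ _)).symm
    have h0T : 0 ≤ ∫ t in (0:ℝ)..T, u t :=
      intervalIntegral.integral_nonneg hTpos.le (fun t _ => hunn t)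
    have hnum : (1-ε) * Real.sqrt a₁ * ((x ^ (k/2+1) - T ^ (k/2+1)) / (k/2+1)) ≤ Φ x := by
      rw [hsplit, ← hIlow]
      linarith
    -- upper bound for the denominator
    have hub : x * u x ≤ (1+ε) * Real.sqrt a₁ * x ^ (k/2+1) := by
      have h1 := (hT x hxT).2
      have h2 : x * (x ^ (k/2)) = x ^ (k/2+1) := by
        nth_rewrite 1 [← Real.rpow_one x]
        rw [← Real.rpow_add hx0, add_comm]
      calc x * u x ≤ x * ((1+ε) * (Real.sqrt a₁ * x ^ (k/2))) :=
            mul_le_mul_of_nonneg_left h1 hx0.le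
        _ = (1+ε) * Real.sqrt a₁ * (x * x ^ (k/2)) := by ring
        _ = (1+ε) * Real.sqrt a₁ * x ^ (k/2+1) := by rw [h2]
    have hxu : 0 < x * u x := by
      apply mul_pos hx0
      rw [hu]
      exact hsqpos x
    have hBpos2 : 0 < (1+ε) * Real.sqrt a₁ * x ^ (k/2+1) := by positivity
    have hAnn : 0 ≤ (1-ε) * Real.sqrt a₁ * ((x ^ (k/2+1) - T ^ (k/2+1)) / (k/2+1)) := by
      apply mul_nonneg (mul_nonneg (by linarith) (Real.sqrt_nonneg _))
      apply div_nonneg (by linarith) hκpos.le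
    have hABeq : ((1-ε) * Real.sqrt a₁ * ((x ^ (k/2+1) - T ^ (k/2+1)) / (k/2+1)))
        / ((1+ε) * Real.sqrt a₁ * x ^ (k/2+1))
        = (1-ε)/(1+ε) * (2/(k+2)) * (1 - T ^ (k/2+1) / x ^ (k/2+1)) :=
      H2aux_div_eq ε k (Real.sqrt a₁) _ _ hε1 hεpos (Real.sqrt_pos.mpr ha₁) hXK hk
    calc c < (1-ε)/(1+ε) * (2/(k+2)) * (1 - T ^ (k/2+1) / x ^ (k/2+1)) := hx
      _ = ((1-ε) * Real.sqrt a₁ * ((x ^ (k/2+1) - T ^ (k/2+1)) / (k/2+1)))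
            / ((1+ε) * Real.sqrt a₁ * x ^ (k/2+1)) := hABeq.symm
      _ ≤ ((1-ε) * Real.sqrt a₁ * ((x ^ (k/2+1) - T ^ (k/2+1)) / (k/2+1))) / (x * u x) :=
            div_le_div_of_nonneg_left hAnn hxu hub
      _ ≤ Φ x / (x * u x) := (div_le_div_iff_of_pos_right hxu).mpr hnum
  -- transfer to the variable s
  have hQg : ∀ᶠ s in atTop, c * g₀ s < s * deriv g₀ s := by
    filter_upwards [hgtop.eventually hQev, eventually_gt_atTop (0:ℝ)] with s hs hs0
    have hGpos : 0 < g₀ s := hgpos s hs0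
    rw [hΦG s] at hs
    have he : g₀ s * u (g₀ s) > 0 := by
      apply mul_pos hGpos
      rw [hu]; exact hsqpos _
    rw [lt_div_iff₀ he] at hs
    -- hs : c * (g₀ s * u (g₀ s)) < s
    have hse : s * deriv g₀ s = s / u (g₀ s) := by
      rw [hgderiv s, hu]
      ring
    rw [hse, lt_div_iff₀ (by rw [hu]; exact hsqpos _ : (0:ℝ) < u (g₀ s))]
    calc c * g₀ s * u (g₀ s) = c * (g₀ s * u (g₀ s)) := by ring
      _ < s := hs
  have hRs : Tendsto (fun s => g₀ s * deriv a₀ (g₀ s) / a₀ (g₀ s)) atTop (𝓝 k) := by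
    have := hRt.comp hgtop
    exact this
  have hE3 : ∀ᶠ s in atTop,
      1 < c * (p + (g₀ s * deriv a₀ (g₀ s) / a₀ (g₀ s)) / 2) := by
    have h1 : Tendsto (fun s => c * (p + (g₀ s * deriv a₀ (g₀ s) / a₀ (g₀ s)) / 2)) atTop
        (𝓝 (c * (p + k / 2))) :=
      tendsto_const_nhds.mul (tendsto_const_nhds.add ((hRs.div_const 2)))
    exact h1.eventually (eventually_gt_nhds hcgt)
  obtain ⟨s₀, hs₀⟩ := eventually_atTop.mp ((hQg.and hE3).and (eventually_gt_atTop (0:ℝ)))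
  refine ⟨max s₀ 1, lt_of_lt_of_le one_pos (le_max_right _ _), fun s hs => ?_⟩
  obtain ⟨⟨hQs, hE3s⟩, hs0⟩ := hs₀ s (le_trans (le_max_left _ _) hs)
  have hGpos : 0 < g₀ s := hgpos s hs0
  have haG : 0 < a₀ (g₀ s) := ha₀pos _
  -- rewrite H₂
  have hsq2 : (deriv g₀ s) ^ 2 = 1 / a₀ (g₀ s) := by
    rw [hgderiv s, div_pow, one_pow, Real.sq_sqrt haG.le]
  have hkey : H₂ s = g₀ s
      - (s * deriv g₀ s) * (p + (g₀ s * deriv a₀ (g₀ s) / a₀ (g₀ s)) / 2) := by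
    rw [hH₂ s, show (deriv g₀ s) ^ 3 = (deriv g₀ s) ^ 2 * deriv g₀ s by ring, hsq2]
    field_simp
    ring
  -- conclude
  have hPpos : 0 < p + (g₀ s * deriv a₀ (g₀ s) / a₀ (g₀ s)) / 2 := by
    by_contra h
    push_neg at h
    have h2 : c * (p + (g₀ s * deriv a₀ (g₀ s) / a₀ (g₀ s)) / 2) ≤ 0 :=
      mul_nonpos_of_nonneg_of_nonpos hcpos.le h
    linarith
  have h5 : c * g₀ s * (p + (g₀ s * deriv a₀ (g₀ s) / a₀ (g₀ s)) / 2)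
      < (s * deriv g₀ s) * (p + (g₀ s * deriv a₀ (g₀ s) / a₀ (g₀ s)) / 2) :=
    mul_lt_mul_of_pos_right hQs hPpos
  have h6 : g₀ s * 1 < g₀ s * (c * (p + (g₀ s * deriv a₀ (g₀ s) / a₀ (g₀ s)) / 2)) :=
    mul_lt_mul_of_pos_left hE3s hGpos
  have h7 : g₀ s * (c * (p + (g₀ s * deriv a₀ (g₀ s) / a₀ (g₀ s)) / 2))
      = c * g₀ s * (p + (g₀ s * deriv a₀ (g₀ s) / a₀ (g₀ s)) / 2) := by ring
  rw [hkey]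
  rw [h7] at h6
  rw [mul_one] at h6
  linarith
end

section
/- Let a₁ > 0, ψ ∈ C²(ℝ) with ψ(s) ≥ ν > 0 for all s ∈ ℝ, let k > 2 and p with k/2 < p, and assume inf_{s≥0}(kψ(s) − sψ'(s)) ≥ 0, lim_{s→+∞} s^{(2−k)/2}ψ(s) = 0, lim_{s→+∞} s^{(4−k)/2}ψ'(s) = 0 and lim_{s→+∞} s^{(6−k)/2}ψ''(s) = 0. Set a₀(s) = a₁|s|^k + ψ(s), let g₀ be the solution of g₀'(s) = 1/√(a₀(g₀(s))), g₀(0) = 0, and define 𝓗₁(s) = −(1/2) a₀''(g₀(s)) s g₀(s)² (g₀'(s))³ + (3/4)(a₀'(g₀(s)))² s g₀(s)² (g₀'(s))⁵ − (1/2) a₀'(g₀(s)) g₀(s) (g₀'(s))² (p s g₀'(s) + g₀(s)) − p s g₀'(s) + p g₀(s). Then for every ε ∈ (0,1) there exists s₁ > 0 such that for all s ≥ s₁, 𝓗₁(s) ≤ ((1−ε)/4)(k+2)(k−2p) g₀'(s) G₀(s) < 0, where G₀(s) = s − (2/(k+2)) g₀(s)√(a₀(g₀(s))). -/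
open Filter Real Topology


noncomputable def IP (k p x u v w : ℝ) : ℝ :=
  -(1/2)*(k*(k-1)*x + w)*(x+u) + (3/4)*(k*x+v)^2 - (p/2)*(k*x+v)*(x+u) - p*(x+u)^2

noncomputable def EPn (k p x u v w : ℝ) : ℝ :=
  k*(2*p-3*k)*(x*u) + (5*k-2*p-2)*(x*v) - 2*(x*w) + 2*p*k*u^2
    - (2*p+k+2)*(u*v) + 3*v^2 - 2*(u*w)

noncomputable def PT (k p a₁ : ℝ) (ψ : ℝ → ℝ) (t : ℝ) : ℝ :=
  IP k p (a₁ * t ^ k) (ψ t) (t * deriv ψ t) (t ^ 2 * deriv (deriv ψ) t)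
    / (a₁ * t ^ k + ψ t) ^ 2

noncomputable def WT (k p a₁ : ℝ) (ψ : ℝ → ℝ) (t : ℝ) : ℝ :=
  t * EPn k p (a₁ * t ^ k) (ψ t) (t * deriv ψ t) (t ^ 2 * deriv (deriv ψ) t)
    / (2*(k+2)) / (Real.sqrt (a₁ * t ^ k + ψ t)) ^ 3

-- generic: f t = (t^e * φ t) type quotient tends to 0
lemma q_tendsto (k a₁ e : ℝ) (ha₁ : 0 < a₁) (hk : 2 < k) (f : ℝ → ℝ)
    (h : Tendsto (fun t : ℝ => t ^ e * f t) atTop (𝓝 0))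
    (q : ℝ → ℝ) (hq : ∀ t : ℝ, 1 ≤ t → q t = (t ^ e * f t) * (t ^ (-((k+2)/2)) * a₁⁻¹)) :
    Tendsto q atTop (𝓝 0) := by
  have hc : (0:ℝ) < (k+2)/2 := by linarith
  have h2 : Tendsto (fun t : ℝ => t ^ (-((k+2)/2)) * a₁⁻¹) atTop (𝓝 0) := by
    simpa using (tendsto_rpow_neg_atTop hc).mul_const a₁⁻¹
  have h3 := h.mul h2
  rw [mul_zero] at h3
  exact h3.congr' ((eventually_ge_atTop 1).mono fun t ht => (hq t ht).symm)

lemma IP_cont (k p : ℝ) : Continuous (fun z : ℝ × ℝ × ℝ => IP k p 1 z.1 z.2.1 z.2.2) := by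
  unfold IP; fun_prop

lemma PT_tendsto (k p a₁ : ℝ) (ha₁ : 0 < a₁) (hk : 2 < k) (ψ : ℝ → ℝ)
    (hlim1 : Tendsto (fun s : ℝ => s ^ ((2 - k) / 2) * ψ s) atTop (𝓝 0))
    (hlim2 : Tendsto (fun s : ℝ => s ^ ((4 - k) / 2) * deriv ψ s) atTop (𝓝 0))
    (hlim3 : Tendsto (fun s : ℝ => s ^ ((6 - k) / 2) * deriv (deriv ψ) s) atTop (𝓝 0)) :
    Tendsto (PT k p a₁ ψ) atTop (𝓝 (-((k+2)*(2*p-k)/4))) := by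
  set q1 : ℝ → ℝ := fun t => ψ t / (a₁ * t ^ k) with hq1def
  set q2 : ℝ → ℝ := fun t => t * deriv ψ t / (a₁ * t ^ k) with hq2def
  set q3 : ℝ → ℝ := fun t => t ^ 2 * deriv (deriv ψ) t / (a₁ * t ^ k) with hq3def
  have hexp : ∀ (t e : ℝ), 1 ≤ t → t ^ e * t ^ (-((k+2)/2)) = t ^ (e - (k+2)/2) := by
    intro t e ht
    rw [← Real.rpow_add (by linarith : (0:ℝ) < t)]; ring_nf
  have hq1 : Tendsto q1 atTop (𝓝 0) := by
    apply q_tendsto k a₁ ((2-k)/2) ha₁ hk ψ hlim1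
    intro t ht
    have ht0 : (0:ℝ) < t := by linarith
    have h1 : t ^ ((2-k)/2) * t ^ (-((k+2)/2)) = t ^ (-k) := by
      rw [hexp t _ ht]; congr 1; ring
    calc ψ t / (a₁ * t ^ k) = ψ t * ((t ^ k)⁻¹ * a₁⁻¹) := by
          rw [div_eq_mul_inv, mul_inv]; ring
      _ = ψ t * (t ^ (-k) * a₁⁻¹) := by rw [Real.rpow_neg ht0.le]
      _ = (t ^ ((2-k)/2) * ψ t) * (t ^ (-((k+2)/2)) * a₁⁻¹) := by rw [← h1]; ring
  have hq2 : Tendsto q2 atTop (𝓝 0) := by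
    apply q_tendsto k a₁ ((4-k)/2) ha₁ hk (deriv ψ) hlim2
    intro t ht
    have ht0 : (0:ℝ) < t := by linarith
    have h1 : t ^ ((4-k)/2) * t ^ (-((k+2)/2)) = t ^ (1-k) := by
      rw [hexp t _ ht]; congr 1; ring
    have h2 : t ^ (1-k) = t * (t ^ k)⁻¹ := by
      rw [Real.rpow_sub ht0, Real.rpow_one, div_eq_mul_inv]
    calc t * deriv ψ t / (a₁ * t ^ k) = deriv ψ t * ((t * (t ^ k)⁻¹) * a₁⁻¹) := by
          rw [div_eq_mul_inv, mul_inv]; ring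
      _ = deriv ψ t * (t ^ ((4-k)/2) * t ^ (-((k+2)/2)) * a₁⁻¹) := by rw [h1, h2]
      _ = (t ^ ((4-k)/2) * deriv ψ t) * (t ^ (-((k+2)/2)) * a₁⁻¹) := by ring
  have hq3 : Tendsto q3 atTop (𝓝 0) := by
    apply q_tendsto k a₁ ((6-k)/2) ha₁ hk (deriv (deriv ψ)) hlim3
    intro t ht
    have ht0 : (0:ℝ) < t := by linarith
    have h1 : t ^ ((6-k)/2) * t ^ (-((k+2)/2)) = t ^ (2-k) := by
      rw [hexp t _ ht]; congr 1; ring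
    have h2 : t ^ (2-k) = t ^ 2 * (t ^ k)⁻¹ := by
      rw [Real.rpow_sub ht0, div_eq_mul_inv, Real.rpow_two]
    calc t ^ 2 * deriv (deriv ψ) t / (a₁ * t ^ k)
        = deriv (deriv ψ) t * ((t ^ 2 * (t ^ k)⁻¹) * a₁⁻¹) := by
          rw [div_eq_mul_inv, mul_inv]; ring
      _ = deriv (deriv ψ) t * (t ^ ((6-k)/2) * t ^ (-((k+2)/2)) * a₁⁻¹) := by rw [h1, h2]
      _ = (t ^ ((6-k)/2) * deriv (deriv ψ) t) * (t ^ (-((k+2)/2)) * a₁⁻¹) := by ring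
  have hnum : Tendsto (fun t => IP k p 1 (q1 t) (q2 t) (q3 t)) atTop (𝓝 (IP k p 1 0 0 0)) := by
    have := ((IP_cont k p).tendsto (0,0,0)).comp
      ((hq1.prodMk_nhds (hq2.prodMk_nhds hq3)) :
        Tendsto (fun t => ((q1 t, q2 t, q3 t) : ℝ × ℝ × ℝ)) atTop (𝓝 ((0:ℝ),(0:ℝ),(0:ℝ))))
    exact this
  have hden : Tendsto (fun t => (1 + q1 t) ^ 2) atTop (𝓝 1) := by
    have := (hq1.const_add 1).pow 2
    norm_num at this; exact this
  have hdiv := hnum.div hden one_ne_zero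
  have hval : IP k p 1 0 0 0 / 1 = -((k+2)*(2*p-k)/4) := by unfold IP; ring
  rw [hval] at hdiv
  apply hdiv.congr'
  filter_upwards [eventually_ge_atTop (1:ℝ)] with t ht
  have ht0 : (0:ℝ) < t := by linarith
  have hX : a₁ * t ^ k ≠ 0 := by positivity
  show IP k p 1 (q1 t) (q2 t) (q3 t) / (1 + q1 t) ^ 2 = PT k p a₁ ψ t
  unfold PT
  have h1 : IP k p (a₁ * t ^ k) (ψ t) (t * deriv ψ t) (t ^ 2 * deriv (deriv ψ) t)
      = (a₁ * t ^ k) ^ 2 * IP k p 1 (q1 t) (q2 t) (q3 t) := by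
    simp only [hq1def, hq2def, hq3def]
    unfold IP; field_simp; try ring
  have h2 : (a₁ * t ^ k + ψ t) ^ 2 = (a₁ * t ^ k) ^ 2 * (1 + q1 t) ^ 2 := by
    simp only [hq1def]; field_simp; try ring
  rw [h1, h2]
  exact (mul_div_mul_left _ _ (pow_ne_zero 2 hX)).symm


noncomputable def Lam (k p : ℝ) (ψ : ℝ → ℝ) (t : ℝ) : ℝ :=
  k*(2*p-3*k)*(t^((2-k)/2)*ψ t) + (5*k-2*p-2)*(t^((4-k)/2)*deriv ψ t)
    - 2*(t^((6-k)/2)*deriv (deriv ψ) t)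

noncomputable def The (k p : ℝ) (ψ : ℝ → ℝ) (t : ℝ) : ℝ :=
  2*p*k*(t^((2-k)/2)*ψ t)^2 - (2*p+k+2)*((t^((2-k)/2)*ψ t)*(t^((4-k)/2)*deriv ψ t))
    + 3*(t^((4-k)/2)*deriv ψ t)^2 - 2*((t^((2-k)/2)*ψ t)*(t^((6-k)/2)*deriv (deriv ψ) t))

lemma sqrt_pow3 {y : ℝ} (hy : 0 ≤ y) : Real.sqrt (y^3) = (Real.sqrt y)^3 := by
  rw [show y^3 = y^2*y by ring, Real.sqrt_mul (sq_nonneg y), Real.sqrt_sq hy, pow_succ,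
    Real.sq_sqrt hy]

lemma WT_eq (k p a₁ : ℝ) (ψ : ℝ → ℝ) (t : ℝ) (ht : 1 ≤ t) :
    WT k p a₁ ψ t
      = (a₁ * Real.sqrt ((t^k)^3) / (Real.sqrt (a₁*t^k + ψ t))^3) * Lam k p ψ t / (2*(k+2))
        + (t^(k-1) / (Real.sqrt (a₁*t^k + ψ t))^3) * The k p ψ t / (2*(k+2)) := by
  have ht0 : (0:ℝ) < t := by linarith
  have hnat : ∀ n : ℕ, t ^ ((n:ℝ)) = t ^ n := fun n => Real.rpow_natCast t n
  have hsX : Real.sqrt ((t^k)^3) = t ^ (3*k/2) := by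
    rw [← Real.rpow_natCast (t^k) 3, ← Real.rpow_mul ht0.le, Real.sqrt_eq_rpow,
      ← Real.rpow_mul ht0.le]
    congr 1; push_cast; ring
  have hadd : ∀ e₁ e₂ : ℝ, t ^ (e₁ + e₂) = t ^ e₁ * t ^ e₂ := fun _ _ => Real.rpow_add ht0 _ _
  have hm1 : t ^ (3*k/2) * t^((2-k)/2) = t^k * t := by
    rw [← hadd, show 3*k/2 + (2-k)/2 = k + 1 by ring, hadd, Real.rpow_one]
  have hm2 : t ^ (3*k/2) * t^((4-k)/2) = t^k * t^(2:ℕ) := by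
    rw [← hadd, show 3*k/2 + (4-k)/2 = k + ((2:ℕ):ℝ) by push_cast; ring, hadd, hnat]
  have hm3 : t ^ (3*k/2) * t^((6-k)/2) = t^k * t^(3:ℕ) := by
    rw [← hadd, show 3*k/2 + (6-k)/2 = k + ((3:ℕ):ℝ) by push_cast; ring, hadd, hnat]
  have hm4 : t^(k-1) * (t^((2-k)/2))^2 = t := by
    rw [pow_two, ← hadd, ← hadd, show k-1 + ((2-k)/2 + (2-k)/2) = 1 by ring, Real.rpow_one]
  have hm5 : t^(k-1) * (t^((2-k)/2) * t^((4-k)/2)) = t^(2:ℕ) := by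
    rw [← hadd, ← hadd, show k-1 + ((2-k)/2 + (4-k)/2) = ((2:ℕ):ℝ) by push_cast; ring, hnat]
  have hm6 : t^(k-1) * (t^((4-k)/2))^2 = t^(3:ℕ) := by
    rw [pow_two, ← hadd, ← hadd, show k-1 + ((4-k)/2 + (4-k)/2) = ((3:ℕ):ℝ) by push_cast; ring,
      hnat]
  have hm7 : t^(k-1) * (t^((2-k)/2) * t^((6-k)/2)) = t^(3:ℕ) := by
    rw [← hadd, ← hadd, show k-1 + ((2-k)/2 + (6-k)/2) = ((3:ℕ):ℝ) by push_cast; ring, hnat]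
  have key7 : t * EPn k p (a₁ * t ^ k) (ψ t) (t * deriv ψ t) (t ^ 2 * deriv (deriv ψ) t)
      = a₁ * Real.sqrt ((t^k)^3) * Lam k p ψ t + t^(k-1) * The k p ψ t := by
    rw [hsX]; unfold EPn Lam The
    linear_combination (-(k*(2*p-3*k))*a₁*ψ t) * hm1 + (-(5*k-2*p-2)*a₁*deriv ψ t) * hm2
      + (2*a₁*deriv (deriv ψ) t) * hm3 + (-(2*p*k)*(ψ t)^2) * hm4
      + ((2*p+k+2)*(ψ t*deriv ψ t)) * hm5 + (-3*(deriv ψ t)^2) * hm6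
      + (2*(ψ t*deriv (deriv ψ) t)) * hm7
  unfold WT
  rw [key7]; ring

lemma WT_tendsto (k p a₁ : ℝ) (ha₁ : 0 < a₁) (hk : 2 < k) (ψ : ℝ → ℝ) (ν : ℝ) (hν : 0 < ν)
    (hbound : ∀ s, ν ≤ ψ s)
    (hlim1 : Tendsto (fun s : ℝ => s ^ ((2 - k) / 2) * ψ s) atTop (𝓝 0))
    (hlim2 : Tendsto (fun s : ℝ => s ^ ((4 - k) / 2) * deriv ψ s) atTop (𝓝 0))
    (hlim3 : Tendsto (fun s : ℝ => s ^ ((6 - k) / 2) * deriv (deriv ψ) s) atTop (𝓝 0)) :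
    Tendsto (WT k p a₁ ψ) atTop (𝓝 0) := by
  have hk2 : (0:ℝ) < k + 2 := by linarith
  have hΛ : Tendsto (Lam k p ψ) atTop (𝓝 0) := by
    have h := ((hlim1.const_mul (k*(2*p-3*k))).add
      (hlim2.const_mul (5*k-2*p-2))).sub (hlim3.const_mul 2)
    norm_num at h
    exact h.congr fun t => by unfold Lam; ring
  have hΘ : Tendsto (The k p ψ) atTop (𝓝 0) := by
    have h := (((hlim1.mul hlim1).const_mul (2*p*k)).sub
      ((hlim1.mul hlim2).const_mul (2*p+k+2))).add
      (((hlim2.mul hlim2).const_mul 3).sub ((hlim1.mul hlim3).const_mul 2))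
    norm_num at h
    exact h.congr fun t => by unfold The; ring
  -- bounds on the two prefactors, for t ≥ 1
  have hpre : ∀ t : ℝ, 1 ≤ t →
      (0 ≤ a₁ * Real.sqrt ((t^k)^3) / (Real.sqrt (a₁*t^k + ψ t))^3 ∧
       a₁ * Real.sqrt ((t^k)^3) / (Real.sqrt (a₁*t^k + ψ t))^3 ≤ a₁ / (Real.sqrt a₁)^3) ∧
      (0 ≤ t^(k-1) / (Real.sqrt (a₁*t^k + ψ t))^3 ∧
       t^(k-1) / (Real.sqrt (a₁*t^k + ψ t))^3 ≤ 1 / (Real.sqrt a₁)^3) := by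
    intro t ht
    have ht0 : (0:ℝ) < t := by linarith
    have hX0 : (0:ℝ) < t ^ k := Real.rpow_pos_of_pos ht0 k
    have hA0 : (0:ℝ) < a₁ * t^k + ψ t := by nlinarith [hbound t, mul_pos ha₁ hX0]
    have hAle : a₁ * t^k ≤ a₁ * t^k + ψ t := by nlinarith [hbound t]
    have hsqle : Real.sqrt a₁ * Real.sqrt (t^k) ≤ Real.sqrt (a₁*t^k + ψ t) := by
      rw [← Real.sqrt_mul ha₁.le]
      exact Real.sqrt_le_sqrt hAle
    have hcube : (Real.sqrt a₁)^3 * (Real.sqrt (t^k))^3 ≤ (Real.sqrt (a₁*t^k + ψ t))^3 := by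
      rw [← mul_pow]
      exact pow_le_pow_left₀ (by positivity) hsqle 3
    have hden0 : (0:ℝ) < (Real.sqrt a₁)^3 * (Real.sqrt (t^k))^3 := by positivity
    have hXs : Real.sqrt ((t^k)^3) = (Real.sqrt (t^k))^3 := sqrt_pow3 hX0.le
    constructor
    · constructor
      · positivity
      · rw [hXs]
        calc a₁ * (Real.sqrt (t^k))^3 / (Real.sqrt (a₁*t^k + ψ t))^3
            ≤ a₁ * (Real.sqrt (t^k))^3 / ((Real.sqrt a₁)^3 * (Real.sqrt (t^k))^3) :=
              div_le_div_of_nonneg_left (by positivity) hden0 hcube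
          _ = a₁ / (Real.sqrt a₁)^3 := by
              rw [mul_comm ((Real.sqrt a₁)^3) _, mul_comm a₁ _, mul_div_mul_left]
              positivity
    · constructor
      · positivity
      · have h1 : t^(k-1) ≤ (Real.sqrt (t^k))^3 := by
          rw [← hXs, show ((t:ℝ)^k)^3 = ((t^k)^((3:ℕ):ℝ)) by rw [Real.rpow_natCast],
            ← Real.rpow_mul ht0.le, Real.sqrt_eq_rpow, ← Real.rpow_mul ht0.le]
          apply Real.rpow_le_rpow_of_exponent_le ht
          push_cast; nlinarith
        calc t^(k-1) / (Real.sqrt (a₁*t^k + ψ t))^3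
            ≤ (Real.sqrt (t^k))^3 / ((Real.sqrt a₁)^3 * (Real.sqrt (t^k))^3) :=
              div_le_div₀ (by positivity) h1 hden0 hcube
          _ = 1 / (Real.sqrt a₁)^3 := by
              rw [mul_comm, div_mul_eq_div_div,
                div_self (by positivity : ((Real.sqrt (t^k))^3 : ℝ) ≠ 0)]
  have hp1 : Tendsto (fun t => (a₁ * Real.sqrt ((t^k)^3) / (Real.sqrt (a₁*t^k + ψ t))^3)
      * Lam k p ψ t / (2*(k+2))) atTop (𝓝 0) := by
    apply squeeze_zero_norm' (a := fun t => (a₁ / (Real.sqrt a₁)^3) * |Lam k p ψ t| / (2*(k+2)))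
    · filter_upwards [eventually_ge_atTop (1:ℝ)] with t ht
      obtain ⟨⟨hb0, hb1⟩, _⟩ := hpre t ht
      rw [Real.norm_eq_abs, abs_div, abs_mul, abs_of_pos (by linarith : (0:ℝ) < 2*(k+2))]
      apply div_le_div_of_nonneg_right _ (by linarith)
      exact mul_le_mul_of_nonneg_right (by rwa [abs_of_nonneg hb0]) (abs_nonneg _)
    · have := (hΛ.abs.const_mul (a₁ / (Real.sqrt a₁)^3)).div_const (2*(k+2))
      simpa using this
  have hp2 : Tendsto (fun t => (t^(k-1) / (Real.sqrt (a₁*t^k + ψ t))^3)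
      * The k p ψ t / (2*(k+2))) atTop (𝓝 0) := by
    apply squeeze_zero_norm' (a := fun t => (1 / (Real.sqrt a₁)^3) * |The k p ψ t| / (2*(k+2)))
    · filter_upwards [eventually_ge_atTop (1:ℝ)] with t ht
      obtain ⟨_, ⟨hb0, hb1⟩⟩ := hpre t ht
      rw [Real.norm_eq_abs, abs_div, abs_mul, abs_of_pos (by linarith : (0:ℝ) < 2*(k+2))]
      apply div_le_div_of_nonneg_right _ (by linarith)
      exact mul_le_mul_of_nonneg_right (by rwa [abs_of_nonneg hb0]) (abs_nonneg _)
    · have := (hΘ.abs.const_mul (1 / (Real.sqrt a₁)^3)).div_const (2*(k+2))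
      simpa using this
  have hsum := hp1.add hp2
  norm_num at hsum
  apply hsum.congr'
  filter_upwards [eventually_ge_atTop (1:ℝ)] with t ht
  exact (WT_eq k p a₁ ψ t ht).symm


set_option maxHeartbeats 2000000 in
lemma key_id (k p a₁ : ℝ) (hk2 : (0:ℝ) < k + 2)
    (ψ : ℝ → ℝ) (a₀ g₀ H₁ G₀ : ℝ → ℝ)
    (s : ℝ) (hT : 0 < g₀ s)
    (hApos : 0 < a₁ * (g₀ s)^k + ψ (g₀ s))
    (haT : a₀ (g₀ s) = a₁ * (g₀ s)^k + ψ (g₀ s))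
    (hg' : deriv g₀ s = 1 / Real.sqrt (a₀ (g₀ s)))
    (hB : deriv a₀ (g₀ s) = a₁*k*(g₀ s)^(k-1) + deriv ψ (g₀ s))
    (hC : deriv (deriv a₀) (g₀ s)
      = a₁*k*(k-1)*(g₀ s)^(k-1-1) + deriv (deriv ψ) (g₀ s))
    (hH₁s : H₁ s = -(1 / 2) * deriv (deriv a₀) (g₀ s) * s * (g₀ s) ^ 2 * (deriv g₀ s) ^ 3
        + (3 / 4) * (deriv a₀ (g₀ s)) ^ 2 * s * (g₀ s) ^ 2 * (deriv g₀ s) ^ 5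
        - (1 / 2) * deriv a₀ (g₀ s) * g₀ s * (deriv g₀ s) ^ 2 * (p * s * deriv g₀ s + g₀ s)
        - p * s * deriv g₀ s + p * g₀ s)
    (hG₀s : G₀ s = s - (2 / (k + 2)) * g₀ s * Real.sqrt (a₀ (g₀ s))) :
    H₁ s = (PT k p a₁ ψ (g₀ s) * G₀ s + WT k p a₁ ψ (g₀ s))
      / Real.sqrt (a₁ * (g₀ s)^k + ψ (g₀ s)) := by
  set T := g₀ s with hTdef
  set R := Real.sqrt (a₁ * T^k + ψ T) with hRdef
  have hR0 : 0 < R := Real.sqrt_pos.mpr hApos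
  have hR2 : R^2 = a₁ * T^k + ψ T := Real.sq_sqrt hApos.le
  have hs : s = G₀ s + 2/(k+2) * (T * R) := by
    rw [hG₀s, haT, ← hRdef]; ring
  have hk1 : T^(k-1) = T^k / T := by
    rw [Real.rpow_sub hT, Real.rpow_one]
  have hk11 : T^(k-1-1) = T^k / T / T := by
    rw [Real.rpow_sub hT, Real.rpow_sub hT, Real.rpow_one]
  rw [hH₁s, hg', hB, hC, haT, ← hRdef, hk1, hk11, hG₀s, haT, ← hRdef]
  have hpsiT : ψ T = R^2 - a₁ * T^k := by linarith [hR2.symm.le, hR2.le]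
  unfold PT WT IP EPn
  rw [← hRdef, hpsiT]
  have hT0 : T ≠ 0 := ne_of_gt hT
  have hR0' : R ≠ 0 := ne_of_gt hR0
  have hk2' : k + 2 ≠ 0 := ne_of_gt hk2
  field_simp
  ring


set_option maxHeartbeats 1000000 in
theorem H1_eventually_negative
    (k a₁ : ℝ) (ha₁ : 0 < a₁)
    (ψ : ℝ → ℝ) (ν : ℝ) (hν : 0 < ν)
    (hψ : ContDiff ℝ 2 ψ) (hbound : ∀ s, ν ≤ ψ s)
    (p : ℝ) (hk : 2 < k) (hkp : k / 2 < p)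
    (hsign : ∀ s ≥ (0 : ℝ), 0 ≤ k * ψ s - s * deriv ψ s)
    (hlim1 : Tendsto (fun s : ℝ => s ^ ((2 - k) / 2) * ψ s) atTop (𝓝 0))
    (hlim2 : Tendsto (fun s : ℝ => s ^ ((4 - k) / 2) * deriv ψ s) atTop (𝓝 0))
    (hlim3 : Tendsto (fun s : ℝ => s ^ ((6 - k) / 2) * deriv (deriv ψ) s) atTop (𝓝 0))
    (a₀ : ℝ → ℝ) (ha₀ : ∀ s, a₀ s = a₁ * |s| ^ k + ψ s)
    (g₀ : ℝ → ℝ)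
    (hg₀ : ∀ s, HasDerivAt g₀ (1 / Real.sqrt (a₀ (g₀ s))) s) (hg₀0 : g₀ 0 = 0)
    (H₁ : ℝ → ℝ)
    (hH₁ : ∀ s,
      H₁ s = -(1 / 2) * deriv (deriv a₀) (g₀ s) * s * (g₀ s) ^ 2 * (deriv g₀ s) ^ 3
        + (3 / 4) * (deriv a₀ (g₀ s)) ^ 2 * s * (g₀ s) ^ 2 * (deriv g₀ s) ^ 5
        - (1 / 2) * deriv a₀ (g₀ s) * g₀ s * (deriv g₀ s) ^ 2 * (p * s * deriv g₀ s + g₀ s)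
        - p * s * deriv g₀ s + p * g₀ s)
    (G₀ : ℝ → ℝ)
    (hG₀ : ∀ s, G₀ s = s - (2 / (k + 2)) * g₀ s * Real.sqrt (a₀ (g₀ s))) :
    ∀ ε ∈ Set.Ioo (0 : ℝ) 1, ∃ s₁ > (0 : ℝ), ∀ s ≥ s₁,
      H₁ s ≤ ((1 - ε) / 4) * (k + 2) * (k - 2 * p) * deriv g₀ s * G₀ s ∧
      ((1 - ε) / 4) * (k + 2) * (k - 2 * p) * deriv g₀ s * G₀ s < 0 := by
  intro ε hε
  obtain ⟨hε0, hε1⟩ := hε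
  have hk0 : (0:ℝ) < k := by linarith
  have hk2 : (0:ℝ) < k + 2 := by linarith
  -- differentiability of ψ
  have hψdiff : Differentiable ℝ ψ := hψ.differentiable (by norm_num)
  have hψ'diff : Differentiable ℝ (deriv ψ) := by
    have h12 : ((1:WithTop ℕ∞) + 1) = 2 := by norm_num
    have h21 : ContDiff ℝ ((1:WithTop ℕ∞)+1) ψ := by rw [h12]; exact hψ
    exact ((contDiff_succ_iff_deriv.mp h21).2.2).differentiable (by norm_num)
  -- positivity of a₀
  have apos : ∀ y, 0 < a₀ y := by
    intro y
    rw [ha₀ y]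
    have h1 : 0 ≤ a₁ * |y| ^ k := mul_nonneg ha₁.le (Real.rpow_nonneg (abs_nonneg y) k)
    linarith [hbound y]
  -- g₀ basics
  have hg'_eq : ∀ s, deriv g₀ s = 1 / Real.sqrt (a₀ (g₀ s)) := fun s => (hg₀ s).deriv
  have hg'pos : ∀ s, 0 < deriv g₀ s := by
    intro s
    rw [hg'_eq s]
    have := Real.sqrt_pos.mpr (apos (g₀ s))
    positivity
  have g₀mono : StrictMono g₀ := strictMono_of_deriv_pos hg'pos
  have g₀diff : Differentiable ℝ g₀ := fun s => (hg₀ s).differentiableAt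
  have g₀cont : Continuous g₀ := g₀diff.continuous
  have g₀pos : ∀ x : ℝ, 0 < x → 0 < g₀ x := by
    intro x hx
    have := g₀mono hx
    rwa [hg₀0] at this
  have a₀cont : Continuous a₀ := by
    have hfn : a₀ = fun y => a₁ * |y| ^ k + ψ y := funext ha₀
    rw [hfn]
    exact (continuous_const.mul (continuous_abs.rpow_const (fun x => Or.inr hk0.le))).add
      hψdiff.continuous
  -- derivatives of a₀ on (0,∞)
  have hA' : ∀ t : ℝ, 0 < t → HasDerivAt a₀ (a₁*k*t^(k-1) + deriv ψ t) t := by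
    intro t ht
    have hloc : a₀ =ᶠ[𝓝 t] fun y => a₁ * y^k + ψ y := by
      filter_upwards [isOpen_Ioi.mem_nhds ht] with y hy
      rw [ha₀ y, abs_of_pos hy]
    have h1 : HasDerivAt (fun y : ℝ => y^k) (k*t^(k-1)) t :=
      Real.hasDerivAt_rpow_const (Or.inl (ne_of_gt ht))
    have h2 := (h1.const_mul a₁).add (hψdiff t).hasDerivAt
    have h3 : HasDerivAt (fun y => a₁ * y^k + ψ y) (a₁*k*t^(k-1) + deriv ψ t) t := by
      exact h2.congr_deriv (by ring)
    exact h3.congr_of_eventuallyEq hloc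
  have hB : ∀ t : ℝ, 0 < t → deriv a₀ t = a₁*k*t^(k-1) + deriv ψ t :=
    fun t ht => (hA' t ht).deriv
  have hC : ∀ t : ℝ, 0 < t →
      deriv (deriv a₀) t = a₁*k*(k-1)*t^(k-1-1) + deriv (deriv ψ) t := by
    intro t ht
    have hloc : deriv a₀ =ᶠ[𝓝 t] fun y => a₁*k*y^(k-1) + deriv ψ y := by
      filter_upwards [isOpen_Ioi.mem_nhds ht] with y hy
      exact hB y hy
    rw [hloc.deriv_eq]
    have h1 : HasDerivAt (fun y : ℝ => y^(k-1)) ((k-1)*t^(k-1-1)) t :=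
      Real.hasDerivAt_rpow_const (Or.inl (ne_of_gt ht))
    have h2 := (h1.const_mul (a₁*k)).add (hψ'diff t).hasDerivAt
    have h3 : HasDerivAt (fun y => a₁*k*y^(k-1) + deriv ψ y)
        (a₁*k*(k-1)*t^(k-1-1) + deriv (deriv ψ) t) t := by
      exact h2.congr_deriv (by ring)
    exact h3.deriv
  have haT : ∀ s : ℝ, 0 < g₀ s → a₀ (g₀ s) = a₁*(g₀ s)^k + ψ (g₀ s) :=
    fun s hs => by rw [ha₀, abs_of_pos hs]
  have hApos2 : ∀ s : ℝ, 0 < g₀ s → 0 < a₁*(g₀ s)^k + ψ (g₀ s) :=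
    fun s hs => (haT s hs) ▸ apos (g₀ s)
  -- g₀ tends to infinity
  have tendsto_g₀ : Tendsto g₀ atTop atTop := by
    apply tendsto_atTop_atTop_of_monotone g₀mono.monotone
    intro b
    by_contra hcon
    push_neg at hcon
    set b' := max b 1 with hb'def
    have hb'1 : (1:ℝ) ≤ b' := le_max_right _ _
    have hcon' : ∀ a, g₀ a < b' := fun a => lt_of_lt_of_le (hcon a) (le_max_left _ _)
    obtain ⟨y, hy, hymax⟩ := (isCompact_Icc (a := (0:ℝ)) (b := b')).exists_isMaxOn
      ⟨0, Set.mem_Icc.mpr ⟨le_rfl, by linarith⟩⟩ a₀cont.continuousOn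
    have hK0 : 0 < a₀ y := apos y
    have hsqK : 0 < Real.sqrt (a₀ y) := Real.sqrt_pos.mpr hK0
    have hlow : ∀ x ∈ interior (Set.Ici (0:ℝ)), 1/Real.sqrt (a₀ y) ≤ deriv g₀ x := by
      intro x hx
      rw [interior_Ici] at hx
      rw [hg'_eq x]
      have hg0x : 0 ≤ g₀ x := by
        have := g₀mono.monotone (le_of_lt (Set.mem_Ioi.mp hx))
        rwa [hg₀0] at this
      have hmem : g₀ x ∈ Set.Icc (0:ℝ) b' := ⟨hg0x, (hcon' x).le⟩
      have hle : a₀ (g₀ x) ≤ a₀ y := hymax hmem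
      have h2 := Real.sqrt_pos.mpr (apos (g₀ x))
      exact one_div_le_one_div_of_le h2 (Real.sqrt_le_sqrt hle)
    have hmvt := (convex_Ici (0:ℝ)).mul_sub_le_image_sub_of_le_deriv
      g₀cont.continuousOn (fun x _ => (g₀diff x).differentiableWithinAt) hlow
      0 Set.self_mem_Ici (Real.sqrt (a₀ y) * b')
      (Set.mem_Ici.mpr (by positivity)) (by positivity)
    rw [hg₀0, sub_zero, sub_zero] at hmvt
    have heq : 1/Real.sqrt (a₀ y) * (Real.sqrt (a₀ y) * b') = b' := by
      field_simp
    rw [heq] at hmvt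
    exact absurd hmvt (hcon' _).not_ge
  -- the derivative of G₀
  have hG₀fun : G₀ = fun s => s - 2/(k+2) * (g₀ s * Real.sqrt (a₀ (g₀ s))) := by
    funext s; rw [hG₀ s]; ring
  have hG₀deriv : ∀ s : ℝ, 0 < g₀ s → HasDerivAt G₀
      (1 - 2/(k+2) * ((1/Real.sqrt (a₀ (g₀ s))) * Real.sqrt (a₀ (g₀ s)) + g₀ s *
        (((a₁*k*(g₀ s)^(k-1) + deriv ψ (g₀ s)) * (1/Real.sqrt (a₀ (g₀ s))))
          / (2*Real.sqrt (a₀ (g₀ s)))))) s := by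
    intro s hs
    have h1 : HasDerivAt (fun x => a₀ (g₀ x))
        ((a₁*k*(g₀ s)^(k-1) + deriv ψ (g₀ s)) * (1/Real.sqrt (a₀ (g₀ s)))) s :=
      (hA' _ hs).comp s (hg₀ s)
    have h2 : HasDerivAt (fun x => Real.sqrt (a₀ (g₀ x)))
        (((a₁*k*(g₀ s)^(k-1) + deriv ψ (g₀ s)) * (1/Real.sqrt (a₀ (g₀ s))))
          / (2*Real.sqrt (a₀ (g₀ s)))) s :=
      h1.sqrt (ne_of_gt (apos _))
    have h3 := (hg₀ s).mul h2
    have h4 := (hasDerivAt_id s).sub (h3.const_mul (2/(k+2)))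
    rw [hG₀fun]
    exact h4
  have hG₀deriv_val : ∀ s : ℝ, 0 < g₀ s → deriv G₀ s
      = (k * ψ (g₀ s) - g₀ s * deriv ψ (g₀ s)) / ((k+2) * (a₁*(g₀ s)^k + ψ (g₀ s))) := by
    intro s hs
    rw [(hG₀deriv s hs).deriv, haT s hs]
    set T := g₀ s with hTdef
    set S := Real.sqrt (a₁*T^k + ψ T) with hSdef
    have hA := hApos2 s hs
    have hS0 : 0 < S := Real.sqrt_pos.mpr hA
    have hS2 : S^2 = a₁*T^k + ψ T := Real.sq_sqrt hA.le
    have hψT : ψ T = S^2 - a₁*T^k := by linarith [hS2.le, hS2.symm.le]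
    have hk1 : T^(k-1) = T^k / T := by rw [Real.rpow_sub hs, Real.rpow_one]
    rw [hk1, hψT]
    field_simp
    ring
  have G₀cont : Continuous G₀ := by
    rw [hG₀fun]
    exact continuous_id.sub (continuous_const.mul (g₀cont.mul
      (Real.continuous_sqrt.comp (a₀cont.comp g₀cont))))
  have G₀monoOn : MonotoneOn G₀ (Set.Ici (0:ℝ)) := by
    apply monotoneOn_of_deriv_nonneg (convex_Ici 0) G₀cont.continuousOn
    · intro x hx
      rw [interior_Ici] at hx
      exact ((hG₀deriv x (g₀pos x hx)).differentiableAt).differentiableWithinAt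
    · intro x hx
      rw [interior_Ici] at hx
      rw [hG₀deriv_val x (g₀pos x hx)]
      apply div_nonneg (hsign (g₀ x) (g₀pos x hx).le)
      have := hApos2 x (g₀pos x hx)
      positivity
  have hG₀0 : G₀ 0 = 0 := by rw [hG₀ 0, hg₀0]; simp
  have hG₀nonneg : ∀ s : ℝ, 0 ≤ s → 0 ≤ G₀ s := by
    intro s hs
    have := G₀monoOn Set.self_mem_Ici (Set.mem_Ici.mpr hs) hs
    rwa [hG₀0] at this
  -- G₀ is eventually strictly positive
  have hex : ∃ s₀ : ℝ, 0 < s₀ ∧ 0 < G₀ s₀ := by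
    by_contra hcon
    push_neg at hcon
    have hzero : ∀ s : ℝ, 0 < s → G₀ s = 0 :=
      fun s hs => le_antisymm (hcon s hs) (hG₀nonneg s hs.le)
    have hd0 : ∀ t : ℝ, 0 < t → k * ψ t - t * deriv ψ t = 0 := by
      intro t ht
      obtain ⟨S, hS⟩ := (tendsto_g₀.eventually_ge_atTop t).exists
      have hS0 : 0 < S := by
        by_contra h
        push_neg at h
        have := g₀mono.monotone h
        rw [hg₀0] at this
        linarith
      obtain ⟨s', hs'mem, hs'⟩ := intermediate_value_Icc hS0.le g₀cont.continuousOn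
        ⟨by rw [hg₀0]; exact ht.le, hS⟩
      have hs'T : 0 < g₀ s' := hs' ▸ ht
      have hs'0 : 0 < s' := by
        by_contra h
        push_neg at h
        have := g₀mono.monotone h
        rw [hg₀0] at this
        linarith
      have hev : G₀ =ᶠ[𝓝 s'] fun _ => (0:ℝ) := by
        filter_upwards [isOpen_Ioi.mem_nhds hs'0] with y hy
        exact hzero y hy
      have hder0 : deriv G₀ s' = 0 := by
        rw [hev.deriv_eq]
        exact deriv_const _ _
      rw [hG₀deriv_val s' hs'T, hs'] at hder0
      have hden : (0:ℝ) < (k+2) * (a₁*t^k + ψ t) := by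
        have h1 : (0:ℝ) < t^k := Real.rpow_pos_of_pos ht k
        have h2 := hbound t
        have : (0:ℝ) < a₁*t^k + ψ t := by nlinarith
        positivity
      rcases div_eq_zero_iff.mp hder0 with h | h
      · exact h
      · exact absurd h (ne_of_gt hden)
    have hconst : ∀ t : ℝ, 1 ≤ t → ψ t * t^(-k) = ψ 1 * (1:ℝ)^(-k) := by
      have hderiv0 : ∀ x ∈ interior (Set.Ici (1:ℝ)),
          deriv (fun y : ℝ => ψ y * y^(-k)) x = 0 := by
        intro x hx
        rw [interior_Ici] at hx
        have hx0 : (0:ℝ) < x := by linarith [Set.mem_Ioi.mp hx]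
        have h1 : HasDerivAt (fun y : ℝ => y^(-k)) (-k*x^(-k-1)) x :=
          Real.hasDerivAt_rpow_const (Or.inl (ne_of_gt hx0))
        have h2 := ((hψdiff x).hasDerivAt.mul h1)
        rw [HasDerivAt.deriv (f := fun y : ℝ => ψ y * y^(-k)) h2]
        have hz := hd0 x hx0
        have hxk : x * x^(-k-1) = x^(-k) := by
          rw [show x * x^(-k-1) = x^(1:ℝ) * x^(-k-1) by rw [Real.rpow_one],
            ← Real.rpow_add hx0]
          congr 1; ring
        have hfac : deriv ψ x * x^(-k) + ψ x * (-k*x^(-k-1))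
            = x^(-k-1) * (x * deriv ψ x - k * ψ x) := by
          rw [← hxk]; ring
        rw [hfac, show x * deriv ψ x - k * ψ x = 0 by linarith, mul_zero]
      have hdiffOn : DifferentiableOn ℝ (fun y : ℝ => ψ y * y^(-k))
          (interior (Set.Ici (1:ℝ))) := by
        intro x hx
        rw [interior_Ici] at hx
        have hx0 : (0:ℝ) < x := by linarith [Set.mem_Ioi.mp hx]
        exact (((hψdiff x).hasDerivAt.mul
          (Real.hasDerivAt_rpow_const (Or.inl (ne_of_gt hx0)))).differentiableAt).differentiableWithinAt
      have hcontOn : ContinuousOn (fun y : ℝ => ψ y * y^(-k)) (Set.Ici (1:ℝ)) := by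
        apply ContinuousOn.mul hψdiff.continuous.continuousOn
        intro x hx
        have hx0 : (0:ℝ) < x := by linarith [Set.mem_Ici.mp hx]
        exact (Real.continuousAt_rpow_const x (-k) (Or.inl (ne_of_gt hx0))).continuousWithinAt
      have hmono := monotoneOn_of_deriv_nonneg (convex_Ici 1) hcontOn hdiffOn
        (fun x hx => (hderiv0 x hx).ge)
      have hanti := antitoneOn_of_deriv_nonpos (convex_Ici 1) hcontOn hdiffOn
        (fun x hx => (hderiv0 x hx).le)
      intro t ht
      exact le_antisymm (hanti Set.self_mem_Ici (Set.mem_Ici.mpr ht) ht)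
        (hmono Set.self_mem_Ici (Set.mem_Ici.mpr ht) ht)
    have hψ1 : 0 < ψ 1 := lt_of_lt_of_le hν (hbound 1)
    have heq : (fun t : ℝ => t^((2-k)/2) * ψ t) =ᶠ[atTop]
        fun t => ψ 1 * t^((2+k)/2) := by
      filter_upwards [eventually_ge_atTop (1:ℝ)] with t ht
      have ht0 : (0:ℝ) < t := by linarith
      have h := hconst t ht
      rw [Real.one_rpow, mul_one] at h
      have hψt : ψ t = ψ 1 * t^k := by
        have hk' : t^(-k) * t^k = 1 := by
          rw [← Real.rpow_add ht0, show -k + k = 0 by ring, Real.rpow_zero]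
        calc ψ t = ψ t * t^(-k) * t^k := by rw [mul_assoc, hk', mul_one]
          _ = ψ 1 * t^k := by rw [h]
      rw [hψt]
      rw [show t^((2-k)/2) * (ψ 1 * t^k) = ψ 1 * (t^((2-k)/2) * t^k) by ring,
        ← Real.rpow_add ht0]
      congr 2
      ring
    have hfin : Tendsto (fun t : ℝ => ψ 1 * t^((2+k)/2)) atTop atTop :=
      (tendsto_rpow_atTop (by linarith : (0:ℝ) < (2+k)/2)).const_mul_atTop hψ1
    exact (hfin.not_tendsto ((disjoint_nhds_atTop (0:ℝ)).symm)) (hlim1.congr' heq)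
  obtain ⟨s₀, hs₀pos, hδ⟩ := hex
  -- the limits
  have hPT := PT_tendsto k p a₁ ha₁ hk ψ hlim1 hlim2 hlim3
  have hWT := WT_tendsto k p a₁ ha₁ hk ψ ν hν hbound hlim1 hlim2 hlim3
  have hm0 : 0 < (k+2)*(2*p-k)/4 := by nlinarith
  set m := (k+2)*(2*p-k)/4 with hmdef
  have hceq : ((1 - ε) / 4) * (k + 2) * (k - 2 * p) = -((1-ε)*m) := by
    rw [hmdef]; ring
  have hclt : ((1 - ε) / 4) * (k + 2) * (k - 2 * p) < 0 := by
    rw [hceq]; nlinarith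
  have hPTev : ∀ᶠ t in atTop,
      PT k p a₁ ψ t < ((1 - ε) / 4) * (k + 2) * (k - 2 * p) - ε*m/2 := by
    apply hPT.eventually_lt_const
    rw [hceq, hmdef]
    nlinarith
  have hWTev : ∀ᶠ t in atTop, WT k p a₁ ψ t < ε*m/2 * G₀ s₀ := by
    apply hWT.eventually_lt_const
    positivity
  have hbig := tendsto_g₀.eventually ((eventually_ge_atTop (1:ℝ)).and (hPTev.and hWTev))
  obtain ⟨s₁', hs₁'⟩ := eventually_atTop.mp hbig
  refine ⟨max s₁' (max s₀ 1),
    lt_of_lt_of_le one_pos (le_trans (le_max_right s₀ 1) (le_max_right _ _)), ?_⟩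
  intro s hs
  obtain ⟨hT1, hPTs, hWTs⟩ := hs₁' s (le_trans (le_max_left _ _) hs)
  have hss₀ : s₀ ≤ s := le_trans (le_trans (le_max_left s₀ 1) (le_max_right _ _)) hs
  have hs0 : (0:ℝ) ≤ s := le_trans hs₀pos.le hss₀
  have hT : 0 < g₀ s := by linarith
  have hGδ : G₀ s₀ ≤ G₀ s :=
    G₀monoOn (Set.mem_Ici.mpr hs₀pos.le) (Set.mem_Ici.mpr hs0) hss₀
  have hGpos : 0 < G₀ s := lt_of_lt_of_le hδ hGδ
  have hkey := key_id k p a₁ hk2 ψ a₀ g₀ H₁ G₀ s hT (hApos2 s hT) (haT s hT)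
    (hg'_eq s) (hB _ hT) (hC _ hT) (hH₁ s) (hG₀ s)
  have hR0 : 0 < Real.sqrt (a₁*(g₀ s)^k + ψ (g₀ s)) := Real.sqrt_pos.mpr (hApos2 s hT)
  have hg'R : deriv g₀ s = 1 / Real.sqrt (a₁*(g₀ s)^k + ψ (g₀ s)) := by
    rw [hg'_eq s, haT s hT]
  constructor
  · rw [hkey, hg'R]
    rw [show ((1 - ε) / 4) * (k + 2) * (k - 2 * p) *
        (1 / Real.sqrt (a₁*(g₀ s)^k + ψ (g₀ s))) * G₀ s
      = (((1 - ε) / 4) * (k + 2) * (k - 2 * p) * G₀ s)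
        / Real.sqrt (a₁*(g₀ s)^k + ψ (g₀ s)) by ring]
    rw [div_le_div_iff_of_pos_right hR0]
    have h1 : PT k p a₁ ψ (g₀ s) * G₀ s
        ≤ (((1 - ε) / 4) * (k + 2) * (k - 2 * p) - ε*m/2) * G₀ s :=
      mul_le_mul_of_nonneg_right hPTs.le hGpos.le
    have h2 : ε*m/2 * G₀ s₀ ≤ ε*m/2 * G₀ s :=
      mul_le_mul_of_nonneg_left hGδ (by positivity)
    nlinarith
  · rw [hg'R, mul_assoc]
    have hpos : 0 < (1 / Real.sqrt (a₁*(g₀ s)^k + ψ (g₀ s))) * G₀ s := by positivity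
    exact mul_neg_of_neg_of_pos hclt hpos
end
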